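/- arXiv:2410.23225 — 3 statements merged into one kernel-verified Lean document; each statement's English description precedes it below -/
import Mathlib

section
/- Let μ be the Gibbs distribution of a permissive spin system (G,q,A_E,A_V) on n = |V| vertices, and suppose μ satisfies the Dobrushin–Shlosman condition with gap δ ∈ (0,1). Let P be the Glauber dynamics for μ. Then for all configurations X,Y : V → [q], W(P(X),P(Y)) ≤ (1 − δ/n)·dist(X,Y), where W is the Wasserstein distance with respect to Hamming distance. -/
open scoped Classical BigOperators

noncomputable section

namespace SpinFormal

variable {V : Type} [Fintype V] [DecidableEq V] {q : ℕ}

/-- `μ` is a probability distribution on the finite type `Ω`. -/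
def IsDist {Ω : Type} [Fintype Ω] (μ : Ω → ℝ) : Prop :=
  (∀ x, 0 ≤ μ x) ∧ ∑ x, μ x = 1

/-- `π` is a coupling of `μ` and `ν`. -/
def IsCoupling {Ω₁ Ω₂ : Type} [Fintype Ω₁] [Fintype Ω₂]
    (π : Ω₁ × Ω₂ → ℝ) (μ : Ω₁ → ℝ) (ν : Ω₂ → ℝ) : Prop :=
  (∀ p, 0 ≤ π p) ∧ (∀ x, ∑ y, π (x, y) = μ x) ∧ (∀ y, ∑ x, π (x, y) = ν y)

/-- 1-Wasserstein distance with respect to a cost `d`. -/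
def Wass {Ω₁ Ω₂ : Type} [Fintype Ω₁] [Fintype Ω₂] (d : Ω₁ → Ω₂ → ℝ)
    (μ : Ω₁ → ℝ) (ν : Ω₂ → ℝ) : ℝ :=
  sInf {c : ℝ | ∃ π : Ω₁ × Ω₂ → ℝ, IsCoupling π μ ν ∧ ∑ p : Ω₁ × Ω₂, π p * d p.1 p.2 = c}

/-- Hamming distance between two configurations, as a real number. -/
def hamming {W : Type} [Fintype W] {α : Type} [DecidableEq α] (σ τ : W → α) : ℝ :=
  ((Finset.univ.filter fun w => σ w ≠ τ w).card : ℝ)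

/-- Total variation distance between two functions on a finite type. -/
def tvDist {X : Type} [Fintype X] (μ ν : X → ℝ) : ℝ := (∑ x, |μ x - ν x|) / 2

/-- The symmetrised edge interaction, as a function on unordered pairs.
When `AE` is symmetric this is just `AE (τ u) (τ v)` on the edge `{u,v}`. -/
def edgeFactor (AE : Fin q → Fin q → ℝ) (τ : V → Fin q) : Sym2 V → ℝ :=
  Sym2.lift ⟨fun u v => (AE (τ u) (τ v) + AE (τ v) (τ u)) / 2, fun u v => by simp [add_comm]⟩

/-- The conditional weight `w^σ(τ)` for the pinning `σ` on `Λ`: products range over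
vertices outside `Λ` and edges with at least one endpoint outside `Λ`. -/
def condWeight (G : SimpleGraph V) (AE : Fin q → Fin q → ℝ) (AV : Fin q → ℝ)
    (Λ : Finset V) (σ τ : V → Fin q) : ℝ :=
  (if ∀ v ∈ Λ, τ v = σ v then (1 : ℝ) else 0)
    * (∏ v ∈ Λᶜ, AV (τ v))
    * ∏ e ∈ Finset.univ.filter
        (fun e : Sym2 V => e ∈ G.edgeSet ∧ ¬ ∀ v ∈ e, v ∈ Λ), edgeFactor AE τ e

/-- The conditional partition function `Z^σ`. -/
def condZ (G : SimpleGraph V) (AE : Fin q → Fin q → ℝ) (AV : Fin q → ℝ)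
    (Λ : Finset V) (σ : V → Fin q) : ℝ :=
  ∑ τ : V → Fin q, condWeight G AE AV Λ σ τ

/-- The conditional Gibbs distribution `μ^σ`. -/
def condDist (G : SimpleGraph V) (AE : Fin q → Fin q → ℝ) (AV : Fin q → ℝ)
    (Λ : Finset V) (σ : V → Fin q) : (V → Fin q) → ℝ :=
  fun τ => condWeight G AE AV Λ σ τ / condZ G AE AV Λ σ

/-- A spin system is permissive if every conditional partition function is positive. -/
def Permissive (G : SimpleGraph V) (AE : Fin q → Fin q → ℝ) (AV : Fin q → ℝ) : Prop :=
  ∀ (Λ : Finset V) (σ : V → Fin q), 0 < condZ G AE AV Λ σ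

/-- Marginal of a distribution on configurations at a single vertex. -/
def marginalAt (μ : (V → Fin q) → ℝ) (u : V) (c : Fin q) : ℝ :=
  ∑ τ : V → Fin q, if τ u = c then μ τ else 0

/-- Marginal probability of a partial configuration `σ` on `Λ`. -/
def margOn (μ : (V → Fin q) → ℝ) (Λ : Finset V) (σ : V → Fin q) : ℝ :=
  ∑ τ : V → Fin q, if ∀ v ∈ Λ, τ v = σ v then μ τ else 0

/-- Two partial configurations on `Λ` differ exactly at the vertex `v ∈ Λ`. -/
def DifferOnlyAt (Λ : Finset V) (σ τ : V → Fin q) (v : V) : Prop :=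
  v ∈ Λ ∧ σ v ≠ τ v ∧ ∀ u ∈ Λ, u ≠ v → σ u = τ u

/-- `C`-coupling independence of the Gibbs distribution of a spin system. -/
def CouplingIndependence (G : SimpleGraph V) (AE : Fin q → Fin q → ℝ)
    (AV : Fin q → ℝ) (C : ℝ) : Prop :=
  ∀ (Λ : Finset V) (σ τ : V → Fin q) (v : V), DifferOnlyAt Λ σ τ v →
    Wass hamming (condDist G AE AV Λ σ) (condDist G AE AV Λ τ) ≤ C

/-- The sphere of radius `ℓ` around `v` in `G` (w.r.t. graph distance). -/
def sphere (G : SimpleGraph V) (v : V) (ℓ : ℕ) : Finset V :=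
  Finset.univ.filter fun u => G.Reachable v u ∧ G.dist v u = ℓ

end SpinFormal

namespace SpinFormal

variable {V : Type} [Fintype V] [DecidableEq V] {q : ℕ}

/-- The Dobrushin influence `ρ(u,v)`: supremum of `d_TV(μ^σ_v, μ^τ_v)` over pairs of
pinnings on `V∖{v}` differing at most at `u`. -/
noncomputable def dobrushinRho (G : SimpleGraph V) (AE : Fin q → Fin q → ℝ)
    (AV : Fin q → ℝ) (u v : V) : ℝ :=
  sSup {t : ℝ | ∃ σ τ : V → Fin q, (∀ w : V, w ≠ u → σ w = τ w) ∧
    t = tvDist (marginalAt (condDist G AE AV ({v} : Finset V)ᶜ σ) v)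
               (marginalAt (condDist G AE AV ({v} : Finset V)ᶜ τ) v)}

/-- The Dobrushin–Shlosman condition with gap `δ`. -/
def DobrushinShlosman (G : SimpleGraph V) (AE : Fin q → Fin q → ℝ)
    (AV : Fin q → ℝ) (δ : ℝ) : Prop :=
  ∀ u : V, ∑ v : V, dobrushinRho G AE AV u v ≤ 1 - δ

/-- One step of the Glauber dynamics for the Gibbs distribution, started from `X`:
pick a uniformly random vertex `v` and resample `X(v)` from the conditional marginal. -/
noncomputable def glauberStep (G : SimpleGraph V) (AE : Fin q → Fin q → ℝ)
    (AV : Fin q → ℝ) (X : V → Fin q) : (V → Fin q) → ℝ := fun Y =>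
  (1 / (Fintype.card V : ℝ)) * ∑ v : V,
    (if ∀ u : V, u ≠ v → Y u = X u then
      marginalAt (condDist G AE AV ({v} : Finset V)ᶜ X) v (Y v)
    else 0)

end SpinFormal

namespace SpinFormal

variable {V : Type} [Fintype V] [DecidableEq V] {q : ℕ}



lemma tvDist_nonneg {X : Type} [Fintype X] (μ ν : X → ℝ) : 0 ≤ tvDist μ ν :=
  div_nonneg (Finset.sum_nonneg fun _ _ => abs_nonneg _) (by norm_num)

lemma tvDist_self {X : Type} [Fintype X] (μ : X → ℝ) : tvDist μ μ = 0 := by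
  simp [tvDist]

lemma tvDist_triangle {X : Type} [Fintype X] (μ κ ν : X → ℝ) :
    tvDist μ ν ≤ tvDist μ κ + tvDist κ ν := by
  rw [tvDist, tvDist, tvDist, ← add_div, div_le_div_iff_of_pos_right (by norm_num : (0:ℝ) < 2)]
  rw [← Finset.sum_add_distrib]
  exact Finset.sum_le_sum fun x _ => abs_sub_le _ _ _

lemma tvDist_le_one {X : Type} [Fintype X] {μ ν : X → ℝ} (hμ : IsDist μ) (hν : IsDist ν) :
    tvDist μ ν ≤ 1 := by
  rw [tvDist, div_le_one (by norm_num : (0:ℝ) < 2)]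
  calc ∑ x, |μ x - ν x| ≤ ∑ x, (μ x + ν x) :=
        Finset.sum_le_sum fun x _ => (abs_sub _ _).trans
          (by rw [abs_of_nonneg (hμ.1 x), abs_of_nonneg (hν.1 x)])
    _ = 2 := by rw [Finset.sum_add_distrib, hμ.2, hν.2]; norm_num

/-- optimal coupling -/
lemma exists_optimal_coupling {Ω : Type} [Fintype Ω] [DecidableEq Ω] (μ ν : Ω → ℝ)
    (hμ : IsDist μ) (hν : IsDist ν) :
    ∃ π : Ω × Ω → ℝ, (∀ p, 0 ≤ π p) ∧ (∀ a, ∑ b, π (a, b) = μ a) ∧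
      (∀ b, ∑ a, π (a, b) = ν b) ∧
      ∑ p : Ω × Ω, (if p.1 = p.2 then 0 else π p) ≤ tvDist μ ν := by
  set m : Ω → ℝ := fun a => min (μ a) (ν a) with hm
  have hmμ : ∀ a, m a ≤ μ a := fun a => min_le_left _ _
  have hmν : ∀ a, m a ≤ ν a := fun a => min_le_right _ _
  have hm0 : ∀ a, 0 ≤ m a := fun a => le_min (hμ.1 a) (hν.1 a)
  have habs : ∀ a, |μ a - ν a| = (μ a - m a) + (ν a - m a) := by
    intro a
    rcases le_total (μ a) (ν a) with h | h
    · have hma : m a = μ a := min_eq_left h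
      rw [abs_of_nonpos (by linarith), hma]; ring
    · have hma : m a = ν a := min_eq_right h
      rw [abs_of_nonneg (by linarith), hma]; ring
  set d : ℝ := tvDist μ ν with hd
  have hsum : ∑ a, (μ a - m a) + ∑ a, (ν a - m a) = 2 * d := by
    rw [hd, tvDist, ← Finset.sum_add_distrib]
    rw [Finset.sum_congr rfl fun a _ => (habs a).symm]
    ring
  have hdiff : ∑ a, (μ a - m a) = ∑ a, (ν a - m a) := by
    have : ∑ a, (μ a - m a) - ∑ a, (ν a - m a) = 0 := by
      rw [← Finset.sum_sub_distrib]
      have : ∀ a ∈ Finset.univ, (μ a - m a) - (ν a - m a) = μ a - ν a := fun a _ => by ring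
      rw [Finset.sum_congr rfl this, Finset.sum_sub_distrib, hμ.2, hν.2, sub_self]
    linarith
  have hμd : ∑ a, (μ a - m a) = d := by linarith
  have hνd : ∑ a, (ν a - m a) = d := by linarith
  rcases eq_or_lt_of_le (tvDist_nonneg μ ν) with h0 | hdpos
  · -- d = 0, μ = ν = m
    have hμm : ∀ a, μ a = m a := by
      intro a
      have h1 : ∀ a ∈ Finset.univ, 0 ≤ μ a - m a := fun a _ => by linarith [hmμ a]
      have := (Finset.sum_eq_zero_iff_of_nonneg h1).1 (by rw [hμd]; exact hd.trans h0.symm) a (Finset.mem_univ a)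
      linarith
    refine ⟨fun p => if p.1 = p.2 then μ p.1 else 0, ?_, ?_, ?_, ?_⟩
    · intro p; dsimp only; split
      · exact hμ.1 _
      · exact le_refl _
    · intro a; simp
    · intro b
      have hνm : ∀ a, ν a = m a := by
        intro a
        have h1 : ∀ a ∈ Finset.univ, 0 ≤ ν a - m a := fun a _ => by linarith [hmν a]
        have := (Finset.sum_eq_zero_iff_of_nonneg h1).1 (by rw [hνd]; exact hd.trans h0.symm) a (Finset.mem_univ a)
        linarith
      have : ∑ a, (if a = b then μ a else 0) = μ b := by simp
      rw [this, hμm b, ← hνm b]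
    · have hz : (∑ p : Ω × Ω, if p.1 = p.2 then (0:ℝ)
          else (fun p : Ω × Ω => if p.1 = p.2 then μ p.1 else (0:ℝ)) p) = 0 := by
        apply Finset.sum_eq_zero
        intro p _
        split <;> simp_all
      rw [hz, hd]
      exact tvDist_nonneg μ ν
  · -- d > 0
    refine ⟨fun p => (if p.1 = p.2 then m p.1 else 0) + (μ p.1 - m p.1) * (ν p.2 - m p.2) / d,
      ?_, ?_, ?_, ?_⟩
    · intro p
      apply add_nonneg
      · split
        · exact hm0 _
        · exact le_refl _
      · apply div_nonneg (mul_nonneg (by linarith [hmμ p.1]) (by linarith [hmν p.2])) hdpos.le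
    · intro a
      rw [Finset.sum_add_distrib]
      have h1 : ∑ b, (if a = b then m a else 0) = m a := by simp
      have h2 : ∑ b, (μ a - m a) * (ν b - m b) / d = (μ a - m a) := by
        rw [← Finset.sum_div, ← Finset.mul_sum, hνd, mul_div_assoc, div_self hdpos.ne', mul_one]
      rw [h1, h2]; ring
    · intro b
      rw [Finset.sum_add_distrib]
      have h1 : ∑ a, (if a = b then m a else 0) = m b := by simp
      have h2 : ∑ a, (μ a - m a) * (ν b - m b) / d = (ν b - m b) := by
        rw [← Finset.sum_div, ← Finset.sum_mul, hμd]
        rw [mul_comm, mul_div_assoc, div_self hdpos.ne', mul_one]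
      rw [h1, h2]; ring
    · calc ∑ p : Ω × Ω, (if p.1 = p.2 then (0:ℝ) else
            (if p.1 = p.2 then m p.1 else 0) + (μ p.1 - m p.1) * (ν p.2 - m p.2) / d)
          ≤ ∑ p : Ω × Ω, (μ p.1 - m p.1) * (ν p.2 - m p.2) / d := by
            apply Finset.sum_le_sum
            intro p _
            split
            · exact div_nonneg (mul_nonneg (by linarith [hmμ p.1]) (by linarith [hmν p.2])) hdpos.le
            · simp_all
        _ = d := by
            rw [Fintype.sum_prod_type]
            have : ∀ a, ∑ b, (μ a - m a) * (ν b - m b) / d = (μ a - m a) := by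
              intro a
              rw [← Finset.sum_div, ← Finset.mul_sum, hνd, mul_div_assoc, div_self hdpos.ne', mul_one]
            rw [Finset.sum_congr rfl fun a _ => this a, hμd]


lemma edgeFactor_nonneg {AE : Fin q → Fin q → ℝ} (hAE : ∀ i j, 0 ≤ AE i j)
    (τ : V → Fin q) (e : Sym2 V) : 0 ≤ edgeFactor AE τ e := by
  induction e using Sym2.ind with
  | _ u v =>
    simp only [edgeFactor, Sym2.lift_mk]
    exact div_nonneg (add_nonneg (hAE _ _) (hAE _ _)) (by norm_num)

lemma condWeight_nonneg {G : SimpleGraph V} {AE : Fin q → Fin q → ℝ} {AV : Fin q → ℝ}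
    (hAE : ∀ i j, 0 ≤ AE i j) (hAV : ∀ i, 0 ≤ AV i)
    (Λ : Finset V) (σ τ : V → Fin q) : 0 ≤ condWeight G AE AV Λ σ τ := by
  unfold condWeight
  apply mul_nonneg
  · apply mul_nonneg
    · split <;> norm_num
    · exact Finset.prod_nonneg fun v _ => hAV _
  · exact Finset.prod_nonneg fun e _ => edgeFactor_nonneg hAE τ e

lemma condDist_nonneg {G : SimpleGraph V} {AE : Fin q → Fin q → ℝ} {AV : Fin q → ℝ}
    (hAE : ∀ i j, 0 ≤ AE i j) (hAV : ∀ i, 0 ≤ AV i) (hperm : Permissive G AE AV)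
    (Λ : Finset V) (σ τ : V → Fin q) : 0 ≤ condDist G AE AV Λ σ τ :=
  div_nonneg (condWeight_nonneg hAE hAV Λ σ τ) (hperm Λ σ).le

lemma sum_condDist {G : SimpleGraph V} {AE : Fin q → Fin q → ℝ} {AV : Fin q → ℝ}
    (hperm : Permissive G AE AV) (Λ : Finset V) (σ : V → Fin q) :
    ∑ τ : V → Fin q, condDist G AE AV Λ σ τ = 1 := by
  unfold condDist
  rw [← Finset.sum_div]
  exact div_self (hperm Λ σ).ne'

lemma marginal_isDist {G : SimpleGraph V} {AE : Fin q → Fin q → ℝ} {AV : Fin q → ℝ}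
    (hAE : ∀ i j, 0 ≤ AE i j) (hAV : ∀ i, 0 ≤ AV i) (hperm : Permissive G AE AV)
    (Λ : Finset V) (σ : V → Fin q) (v : V) :
    IsDist (marginalAt (condDist G AE AV Λ σ) v) := by
  constructor
  · intro c
    apply Finset.sum_nonneg
    intro τ _
    split
    · exact condDist_nonneg hAE hAV hperm Λ σ τ
    · exact le_refl _
  · unfold marginalAt
    rw [Finset.sum_comm]
    have h : ∀ τ : V → Fin q, ∑ c : Fin q,
        (if τ v = c then condDist G AE AV Λ σ τ else 0) = condDist G AE AV Λ σ τ := by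
      intro τ
      simp
    rw [Finset.sum_congr rfl fun τ _ => h τ]
    exact sum_condDist hperm Λ σ

lemma sum_agree_eq (Y : V → Fin q) (v : V) (f : (V → Fin q) → ℝ) :
    ∑ Z : V → Fin q, (if ∀ u : V, u ≠ v → Z u = Y u then f Z else 0)
      = ∑ b : Fin q, f (Function.update Y v b) := by
  rw [← Finset.sum_filter]
  have hset : (Finset.univ.filter fun Z : V → Fin q => ∀ u : V, u ≠ v → Z u = Y u)
      = Finset.univ.image (fun b : Fin q => Function.update Y v b) := by
    ext Z
    simp only [Finset.mem_filter, Finset.mem_image, Finset.mem_univ, true_and]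
    constructor
    · intro h
      refine ⟨Z v, ?_⟩
      funext u
      by_cases hu : u = v
      · subst hu; simp
      · rw [Function.update_of_ne hu]
        exact (h u hu).symm
    · rintro ⟨b, rfl⟩ u hu
      rw [Function.update_of_ne hu]
  rw [hset, Finset.sum_image]
  intro b _ b' _ h
  have := congrFun h v
  simpa using this

lemma hamming_update (X Y : V → Fin q) (v : V) (a b : Fin q) :
    hamming (Function.update X v a) (Function.update Y v b)
      = (((Finset.univ.filter fun u => X u ≠ Y u).erase v).card : ℝ)
        + (if a = b then 0 else 1) := by
  unfold hamming
  by_cases hab : a = b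
  · subst hab
    have hset : (Finset.univ.filter fun w => Function.update X v a w ≠ Function.update Y v a w)
        = (Finset.univ.filter fun u => X u ≠ Y u).erase v := by
      ext w
      simp only [Finset.mem_filter, Finset.mem_erase, Finset.mem_univ, true_and]
      by_cases hw : w = v
      · subst hw; simp
      · rw [Function.update_of_ne hw, Function.update_of_ne hw]
        tauto
    rw [hset]
    simp
  · have hset : (Finset.univ.filter fun w => Function.update X v a w ≠ Function.update Y v b w)
        = insert v ((Finset.univ.filter fun u => X u ≠ Y u).erase v) := by
      ext w
      simp only [Finset.mem_filter, Finset.mem_insert, Finset.mem_erase, Finset.mem_univ, true_and]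
      by_cases hw : w = v
      · subst hw; simp [hab]
      · rw [Function.update_of_ne hw, Function.update_of_ne hw]
        tauto
    rw [hset, Finset.card_insert_of_notMem (Finset.notMem_erase v _)]
    push_cast
    rw [if_neg hab]

lemma mem_rho_set {G : SimpleGraph V} {AE : Fin q → Fin q → ℝ} {AV : Fin q → ℝ}
    (u v : V) {t : ℝ} (σ τ : V → Fin q) (h : ∀ w : V, w ≠ u → σ w = τ w)
    (ht : t = tvDist (marginalAt (condDist G AE AV ({v} : Finset V)ᶜ σ) v)
               (marginalAt (condDist G AE AV ({v} : Finset V)ᶜ τ) v)) :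
    t ∈ {t : ℝ | ∃ σ τ : V → Fin q, (∀ w : V, w ≠ u → σ w = τ w) ∧
      t = tvDist (marginalAt (condDist G AE AV ({v} : Finset V)ᶜ σ) v)
                 (marginalAt (condDist G AE AV ({v} : Finset V)ᶜ τ) v)} :=
  ⟨σ, τ, h, ht⟩

lemma rho_set_bddAbove {G : SimpleGraph V} {AE : Fin q → Fin q → ℝ} {AV : Fin q → ℝ}
    (hAE : ∀ i j, 0 ≤ AE i j) (hAV : ∀ i, 0 ≤ AV i) (hperm : Permissive G AE AV) (u v : V) :
    BddAbove {t : ℝ | ∃ σ τ : V → Fin q, (∀ w : V, w ≠ u → σ w = τ w) ∧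
      t = tvDist (marginalAt (condDist G AE AV ({v} : Finset V)ᶜ σ) v)
                 (marginalAt (condDist G AE AV ({v} : Finset V)ᶜ τ) v)} := by
  refine ⟨1, ?_⟩
  rintro t ⟨σ, τ, -, rfl⟩
  exact tvDist_le_one (marginal_isDist hAE hAV hperm _ σ v) (marginal_isDist hAE hAV hperm _ τ v)

lemma tv_le_rho {G : SimpleGraph V} {AE : Fin q → Fin q → ℝ} {AV : Fin q → ℝ}
    (hAE : ∀ i j, 0 ≤ AE i j) (hAV : ∀ i, 0 ≤ AV i) (hperm : Permissive G AE AV)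
    (u v : V) (σ τ : V → Fin q) (h : ∀ w : V, w ≠ u → σ w = τ w) :
    tvDist (marginalAt (condDist G AE AV ({v} : Finset V)ᶜ σ) v)
           (marginalAt (condDist G AE AV ({v} : Finset V)ᶜ τ) v)
      ≤ dobrushinRho G AE AV u v :=
  le_csSup (rho_set_bddAbove hAE hAV hperm u v) (mem_rho_set u v σ τ h rfl)

lemma rho_nonneg {G : SimpleGraph V} {AE : Fin q → Fin q → ℝ} {AV : Fin q → ℝ}
    (hAE : ∀ i j, 0 ≤ AE i j) (hAV : ∀ i, 0 ≤ AV i) (hperm : Permissive G AE AV)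
    (hq : 2 ≤ q) (u v : V) : 0 ≤ dobrushinRho G AE AV u v := by
  have hq0 : 0 < q := by omega
  set σ : V → Fin q := fun _ => ⟨0, hq0⟩ with hσ
  have h0 : (0 : ℝ) ∈ {t : ℝ | ∃ σ τ : V → Fin q, (∀ w : V, w ≠ u → σ w = τ w) ∧
      t = tvDist (marginalAt (condDist G AE AV ({v} : Finset V)ᶜ σ) v)
                 (marginalAt (condDist G AE AV ({v} : Finset V)ᶜ τ) v)} :=
    ⟨σ, σ, fun _ _ => rfl, (tvDist_self _).symm⟩
  exact le_csSup (rho_set_bddAbove hAE hAV hperm u v) h0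

lemma tv_le_sum_rho {G : SimpleGraph V} {AE : Fin q → Fin q → ℝ} {AV : Fin q → ℝ}
    (hAE : ∀ i j, 0 ≤ AE i j) (hAV : ∀ i, 0 ≤ AV i) (hperm : Permissive G AE AV)
    (X Y : V → Fin q) (v : V) :
    tvDist (marginalAt (condDist G AE AV ({v} : Finset V)ᶜ X) v)
           (marginalAt (condDist G AE AV ({v} : Finset V)ᶜ Y) v)
      ≤ ∑ u ∈ Finset.univ.filter fun u => X u ≠ Y u, dobrushinRho G AE AV u v := by
  set marg : (V → Fin q) → Fin q → ℝ :=
    fun σ => marginalAt (condDist G AE AV ({v} : Finset V)ᶜ σ) v with hmarg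
  set hyb : Finset V → (V → Fin q) := fun S w => if w ∈ S then Y w else X w with hhyb
  have key : ∀ S : Finset V, tvDist (marg X) (marg (hyb S))
      ≤ ∑ u ∈ S.filter fun u => X u ≠ Y u, dobrushinRho G AE AV u v := by
    intro S
    induction S using Finset.induction_on with
    | empty =>
      have : hyb ∅ = X := by funext w; simp [hhyb]
      rw [this]
      simp [tvDist_self]
    | @insert u S hu ih =>
      by_cases hXY : X u = Y u
      · have heq : hyb (insert u S) = hyb S := by
          funext w
          by_cases hw : w = u
          · subst hw
            simp only [hhyb, Finset.mem_insert]
            by_cases hwS : w ∈ S <;> simp [hwS, hXY]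
          · simp [hhyb, Finset.mem_insert, hw]
        have hfil : (insert u S).filter (fun u => X u ≠ Y u) = S.filter fun u => X u ≠ Y u := by
          rw [Finset.filter_insert, if_neg (by simpa using hXY)]
        rw [heq, hfil]
        exact ih
      · have hagree : ∀ w : V, w ≠ u → hyb S w = hyb (insert u S) w := by
          intro w hw
          simp only [hhyb, Finset.mem_insert]
          by_cases hwS : w ∈ S <;> simp [hwS, hw]
        have hstep := tv_le_rho hAE hAV hperm u v (hyb S) (hyb (insert u S)) hagree
        have htri := tvDist_triangle (marg X) (marg (hyb S)) (marg (hyb (insert u S)))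
        have hfil : (insert u S).filter (fun u => X u ≠ Y u)
            = insert u (S.filter fun u => X u ≠ Y u) := by
          rw [Finset.filter_insert, if_pos hXY]
        rw [hfil, Finset.sum_insert (fun hmem => hu (Finset.mem_of_mem_filter u hmem))]
        calc tvDist (marg X) (marg (hyb (insert u S)))
            ≤ tvDist (marg X) (marg (hyb S)) + tvDist (marg (hyb S)) (marg (hyb (insert u S))) := htri
          _ ≤ (∑ u ∈ S.filter fun u => X u ≠ Y u, dobrushinRho G AE AV u v)
              + dobrushinRho G AE AV u v := add_le_add ih hstep
          _ = _ := by ring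
  have huniv : hyb Finset.univ = Y := by funext w; simp [hhyb]
  have := key Finset.univ
  rw [huniv] at this
  exact this

end SpinFormal

open SpinFormal

/-- under the Dobrushin–Shlosman condition with gap `δ`, the Glauber
dynamics is `(1 − δ/n)`-contractive in Hamming Wasserstein distance. -/
theorem glauber_contraction_of_dobrushin_shlosman
    {V : Type} [Fintype V] [DecidableEq V] {q : ℕ}
    (G : SimpleGraph V) (AE : Fin q → Fin q → ℝ) (AV : Fin q → ℝ)
    (hq : 2 ≤ q)
    (hAEsymm : ∀ i j, AE i j = AE j i)
    (hAEnn : ∀ i j, 0 ≤ AE i j) (hAVnn : ∀ i, 0 ≤ AV i)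
    (hperm : Permissive G AE AV)
    (δ : ℝ) (hδ0 : 0 < δ) (hδ1 : δ < 1)
    (hDS : DobrushinShlosman G AE AV δ) :
    ∀ X Y : V → Fin q,
      Wass hamming (glauberStep G AE AV X) (glauberStep G AE AV Y)
        ≤ (1 - δ / (Fintype.card V : ℝ)) * hamming X Y := by
  intro X Y
  have hbdd : BddBelow {c : ℝ | ∃ π : ((V → Fin q) × (V → Fin q)) → ℝ,
      IsCoupling π (glauberStep G AE AV X) (glauberStep G AE AV Y) ∧
      ∑ p : (V → Fin q) × (V → Fin q), π p * hamming p.1 p.2 = c} := by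
    refine ⟨0, ?_⟩
    rintro c ⟨π, hπ, rfl⟩
    exact Finset.sum_nonneg fun p _ => mul_nonneg (hπ.1 p)
      (by unfold hamming; positivity)
  by_cases hcard : Fintype.card V = 0
  · have hV : IsEmpty V := Fintype.card_eq_zero_iff.mp hcard
    have hg : ∀ W Z : V → Fin q, glauberStep G AE AV W Z = 0 := by
      intro W Z
      unfold glauberStep
      rw [Finset.univ_eq_empty, Finset.sum_empty, mul_zero]
    have hzero : (0 : ℝ) ∈ {c : ℝ | ∃ π : ((V → Fin q) × (V → Fin q)) → ℝ,
        IsCoupling π (glauberStep G AE AV X) (glauberStep G AE AV Y) ∧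
        ∑ p : (V → Fin q) × (V → Fin q), π p * hamming p.1 p.2 = c} := by
      refine ⟨fun _ => 0, ⟨fun p => le_refl 0, fun x => by simp [hg], fun y => by simp [hg]⟩, by simp⟩
    have hW := csInf_le hbdd hzero
    have hham : hamming X Y = 0 := by
      unfold hamming
      rw [Finset.univ_eq_empty]
      simp
    rw [hham, mul_zero]
    exact hW
  · have hn : (0 : ℝ) < (Fintype.card V : ℝ) := by
      exact_mod_cast Nat.pos_of_ne_zero hcard
    set n : ℝ := (Fintype.card V : ℝ) with hnn
    set D : Finset V := Finset.univ.filter fun u => X u ≠ Y u with hD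
    have hex : ∀ v : V, ∃ π : Fin q × Fin q → ℝ, (∀ p, 0 ≤ π p) ∧
        (∀ a, ∑ b, π (a, b) = marginalAt (condDist G AE AV ({v} : Finset V)ᶜ X) v a) ∧
        (∀ b, ∑ a, π (a, b) = marginalAt (condDist G AE AV ({v} : Finset V)ᶜ Y) v b) ∧
        ∑ p : Fin q × Fin q, (if p.1 = p.2 then 0 else π p)
          ≤ tvDist (marginalAt (condDist G AE AV ({v} : Finset V)ᶜ X) v)
                   (marginalAt (condDist G AE AV ({v} : Finset V)ᶜ Y) v) :=
      fun v => exists_optimal_coupling _ _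
        (marginal_isDist hAEnn hAVnn hperm _ X v) (marginal_isDist hAEnn hAVnn hperm _ Y v)
    choose π hπ0 hπ1 hπ2 hπc using hex
    set cp : ((V → Fin q) × (V → Fin q)) → ℝ := fun p =>
      (1 / n) * ∑ v : V, (if (∀ u : V, u ≠ v → p.1 u = X u) ∧ (∀ u : V, u ≠ v → p.2 u = Y u)
        then π v (p.1 v, p.2 v) else 0) with hcp
    have hcp0 : ∀ p, 0 ≤ cp p := by
      intro p
      apply mul_nonneg (by positivity)
      apply Finset.sum_nonneg
      intro v _
      split
      · exact hπ0 v _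
      · exact le_refl _
    have hmarg1 : ∀ Z1 : V → Fin q, ∑ Z2 : V → Fin q, cp (Z1, Z2) = glauberStep G AE AV X Z1 := by
      intro Z1
      simp only [hcp]
      rw [← Finset.mul_sum, Finset.sum_comm]
      unfold glauberStep
      congr 1
      apply Finset.sum_congr rfl
      intro v _
      by_cases hA : ∀ u : V, u ≠ v → Z1 u = X u
      · rw [if_pos hA]
        have hsplit : ∀ Z2 : V → Fin q,
            (if (∀ u : V, u ≠ v → Z1 u = X u) ∧ (∀ u : V, u ≠ v → Z2 u = Y u)
              then π v (Z1 v, Z2 v) else 0)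
            = if (∀ u : V, u ≠ v → Z2 u = Y u) then π v (Z1 v, Z2 v) else 0 := by
          intro Z2
          by_cases hB : ∀ u : V, u ≠ v → Z2 u = Y u
          · rw [if_pos ⟨hA, hB⟩, if_pos hB]
          · rw [if_neg (fun h => hB h.2), if_neg hB]
        rw [Finset.sum_congr rfl fun Z2 _ => hsplit Z2]
        rw [sum_agree_eq Y v (fun Z2 => π v (Z1 v, Z2 v))]
        simp only [Function.update_self]
        exact hπ1 v (Z1 v)
      · rw [if_neg hA]
        simp [hA]
    have hmarg2 : ∀ Z2 : V → Fin q, ∑ Z1 : V → Fin q, cp (Z1, Z2) = glauberStep G AE AV Y Z2 := by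
      intro Z2
      simp only [hcp]
      rw [← Finset.mul_sum, Finset.sum_comm]
      unfold glauberStep
      congr 1
      apply Finset.sum_congr rfl
      intro v _
      by_cases hB : ∀ u : V, u ≠ v → Z2 u = Y u
      · rw [if_pos hB]
        have : ∀ Z1 : V → Fin q,
            (if (∀ u : V, u ≠ v → Z1 u = X u) ∧ (∀ u : V, u ≠ v → Z2 u = Y u)
              then π v (Z1 v, Z2 v) else 0)
            = if ∀ u : V, u ≠ v → Z1 u = X u then π v (Z1 v, Z2 v) else 0 := by
          intro Z1
          by_cases hA : ∀ u : V, u ≠ v → Z1 u = X u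
          · rw [if_pos ⟨hA, hB⟩, if_pos hA]
          · rw [if_neg (fun h => hA h.1), if_neg hA]
        rw [Finset.sum_congr rfl fun Z1 _ => this Z1]
        rw [sum_agree_eq X v (fun Z1 => π v (Z1 v, Z2 v))]
        simp only [Function.update_self]
        exact hπ2 v (Z2 v)
      · rw [if_neg hB]
        simp [hB]
    have hcoupling : IsCoupling cp (glauberStep G AE AV X) (glauberStep G AE AV Y) :=
      ⟨hcp0, hmarg1, hmarg2⟩
    -- cost identity
    have hcost_eq : (∑ p : (V → Fin q) × (V → Fin q), cp p * hamming p.1 p.2)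
        = (1 / n) * ∑ v : V, ∑ a : Fin q, ∑ b : Fin q,
            π v (a, b) * hamming (Function.update X v a) (Function.update Y v b) := by
      have e1 : ∀ p : (V → Fin q) × (V → Fin q), cp p * hamming p.1 p.2
          = (1 / n) * ∑ v : V, (if (∀ u : V, u ≠ v → p.1 u = X u)
                ∧ (∀ u : V, u ≠ v → p.2 u = Y u)
              then π v (p.1 v, p.2 v) * hamming p.1 p.2 else 0) := by
        intro p
        simp only [hcp]
        rw [mul_assoc, Finset.sum_mul]
        congr 1
        apply Finset.sum_congr rfl
        intro v _
        rw [ite_mul, zero_mul]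
      rw [Finset.sum_congr rfl fun p _ => e1 p, ← Finset.mul_sum]
      congr 1
      rw [Finset.sum_comm]
      apply Finset.sum_congr rfl
      intro v _
      rw [Fintype.sum_prod_type]
      have inner : ∀ Z1 : V → Fin q,
          (∑ Z2 : V → Fin q, if (∀ u : V, u ≠ v → Z1 u = X u)
              ∧ (∀ u : V, u ≠ v → Z2 u = Y u)
            then π v (Z1 v, Z2 v) * hamming Z1 Z2 else 0)
          = if ∀ u : V, u ≠ v → Z1 u = X u then
              ∑ b : Fin q, π v (Z1 v, b) * hamming Z1 (Function.update Y v b) else 0 := by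
        intro Z1
        by_cases hA : ∀ u : V, u ≠ v → Z1 u = X u
        · rw [if_pos hA]
          have hsplit : ∀ Z2 : V → Fin q,
              (if (∀ u : V, u ≠ v → Z1 u = X u) ∧ (∀ u : V, u ≠ v → Z2 u = Y u)
                then π v (Z1 v, Z2 v) * hamming Z1 Z2 else 0)
              = if (∀ u : V, u ≠ v → Z2 u = Y u)
                then π v (Z1 v, Z2 v) * hamming Z1 Z2 else 0 := by
            intro Z2
            by_cases hB : ∀ u : V, u ≠ v → Z2 u = Y u
            · rw [if_pos ⟨hA, hB⟩, if_pos hB]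
            · rw [if_neg (fun h => hB h.2), if_neg hB]
          rw [Finset.sum_congr rfl fun Z2 _ => hsplit Z2]
          rw [sum_agree_eq Y v (fun Z2 => π v (Z1 v, Z2 v) * hamming Z1 Z2)]
          apply Finset.sum_congr rfl
          intro b _
          rw [Function.update_self]
        · rw [if_neg hA]
          simp [hA]
      rw [Finset.sum_congr rfl fun Z1 _ => inner Z1]
      rw [sum_agree_eq X v
        (fun Z1 => ∑ b : Fin q, π v (Z1 v, b) * hamming Z1 (Function.update Y v b))]
      apply Finset.sum_congr rfl
      intro a _
      apply Finset.sum_congr rfl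
      intro b _
      rw [Function.update_self]
    -- per-vertex bound
    have hT : ∀ v : V, (∑ a : Fin q, ∑ b : Fin q,
          π v (a, b) * hamming (Function.update X v a) (Function.update Y v b))
        ≤ ((D.erase v).card : ℝ) + ∑ u ∈ D, dobrushinRho G AE AV u v := by
      intro v
      have hterm : ∀ a b : Fin q,
          π v (a, b) * hamming (Function.update X v a) (Function.update Y v b)
          = ((D.erase v).card : ℝ) * π v (a, b) + (if a = b then 0 else π v (a, b)) := by
        intro a b
        rw [hamming_update X Y v a b, ← hD]
        by_cases hab : a = b
        · rw [if_pos hab, if_pos hab]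
          ring
        · rw [if_neg hab, if_neg hab]
          ring
      have e2 : (∑ a : Fin q, ∑ b : Fin q,
            π v (a, b) * hamming (Function.update X v a) (Function.update Y v b))
          = ((D.erase v).card : ℝ) * (∑ a : Fin q, ∑ b : Fin q, π v (a, b))
            + ∑ a : Fin q, ∑ b : Fin q, (if a = b then 0 else π v (a, b)) := by
        rw [Finset.mul_sum, ← Finset.sum_add_distrib]
        apply Finset.sum_congr rfl
        intro a _
        rw [Finset.mul_sum, ← Finset.sum_add_distrib]
        exact Finset.sum_congr rfl fun b _ => hterm a b
      have hsum1 : (∑ a : Fin q, ∑ b : Fin q, π v (a, b)) = 1 := by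
        rw [Finset.sum_congr rfl fun a _ => hπ1 v a]
        exact (marginal_isDist hAEnn hAVnn hperm _ X v).2
      have htv : (∑ a : Fin q, ∑ b : Fin q, (if a = b then 0 else π v (a, b)))
          ≤ ∑ u ∈ D, dobrushinRho G AE AV u v := by
        have h1 : (∑ a : Fin q, ∑ b : Fin q, (if a = b then 0 else π v (a, b)))
            = ∑ p : Fin q × Fin q, (if p.1 = p.2 then 0 else π v p) := by
          rw [Fintype.sum_prod_type]
        rw [h1, hD]
        exact (hπc v).trans (tv_le_sum_rho hAEnn hAVnn hperm X Y v)
      rw [e2, hsum1, mul_one]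
      exact add_le_add (le_refl _) htv
    -- assemble
    have hE : ∀ v : V, ((D.erase v).card : ℝ) = (D.card : ℝ) - (if v ∈ D then 1 else 0) := by
      intro v
      by_cases hv : v ∈ D
      · rw [Finset.card_erase_of_mem hv, if_pos hv,
          Nat.cast_sub (Finset.one_le_card.mpr ⟨v, hv⟩), Nat.cast_one]
      · rw [Finset.erase_eq_of_notMem hv, if_neg hv, sub_zero]
    have hsumE : (∑ v : V, ((D.erase v).card : ℝ)) = n * (D.card : ℝ) - (D.card : ℝ) := by
      have hind : (∑ v : V, (if v ∈ D then (1 : ℝ) else 0)) = (D.card : ℝ) := by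
        rw [Finset.sum_ite_mem, Finset.univ_inter, Finset.sum_const, nsmul_eq_mul, mul_one]
      rw [Finset.sum_congr rfl fun v _ => hE v, Finset.sum_sub_distrib,
        Finset.sum_const, nsmul_eq_mul, hind, Finset.card_univ]
    have hsumRho : (∑ v : V, ∑ u ∈ D, dobrushinRho G AE AV u v)
        ≤ (1 - δ) * (D.card : ℝ) := by
      rw [Finset.sum_comm]
      calc (∑ u ∈ D, ∑ v : V, dobrushinRho G AE AV u v)
          ≤ ∑ u ∈ D, (1 - δ) := Finset.sum_le_sum fun u _ => hDS u
        _ = (1 - δ) * (D.card : ℝ) := by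
            rw [Finset.sum_const, nsmul_eq_mul]; ring
    have hcost_le : (∑ p : (V → Fin q) × (V → Fin q), cp p * hamming p.1 p.2)
        ≤ (1 - δ / n) * (D.card : ℝ) := by
      rw [hcost_eq]
      calc (1 / n) * ∑ v : V, ∑ a : Fin q, ∑ b : Fin q,
              π v (a, b) * hamming (Function.update X v a) (Function.update Y v b)
          ≤ (1 / n) * ∑ v : V, (((D.erase v).card : ℝ) + ∑ u ∈ D, dobrushinRho G AE AV u v) := by
            apply mul_le_mul_of_nonneg_left (Finset.sum_le_sum fun v _ => hT v) (by positivity)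
        _ = (1 / n) * ((∑ v : V, ((D.erase v).card : ℝ))
              + ∑ v : V, ∑ u ∈ D, dobrushinRho G AE AV u v) := by
            rw [Finset.sum_add_distrib]
        _ ≤ (1 / n) * ((n * (D.card : ℝ) - (D.card : ℝ)) + (1 - δ) * (D.card : ℝ)) := by
            apply mul_le_mul_of_nonneg_left _ (by positivity)
            rw [hsumE]
            exact add_le_add (le_refl _) hsumRho
        _ = (1 - δ / n) * (D.card : ℝ) := by
            field_simp
            ring
    have hham : hamming X Y = (D.card : ℝ) := by rw [hD]; rfl
    rw [hham]
    refine le_trans (csInf_le hbdd ⟨cp, hcoupling, rfl⟩) hcost_le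
end
end

section
/- Let G be a finite simple graph of maximum degree at most Δ, where Δ ≥ 2, let v be a vertex of G, let V' ⊆ V(G)∖{v} be nonempty with n = |V'|, and let G' = G[V'] be the induced subgraph. Let L and L' be colour lists L_u, L'_u ⊆ [q] for u ∈ V' such that L_u ⊆ L'_u for all u ∈ V' and L_u = L'_u for every u ∈ V' that is not a neighbour of v in G. Fix flip parameters (p_ℓ)_{ℓ≥1} with p_ℓ ∈ [0,1] for all ℓ and p_ℓ = 0 for all ℓ > 6, and let P and Q be the flip dynamics with these parameters for the instances (G',L) and (G',L') respectively. Then for every proper list colouring X of (G',L), W(P(X),Q(X)) ≤ 12Δ⁷/n, where W is the Wasserstein distance with respect to Hamming distance. -/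
open scoped Classical BigOperators

noncomputable section

namespace SpinFormal

variable {V : Type} [Fintype V] [DecidableEq V] {q : ℕ}

/-- The two-colour (Kempe) graph for colours `a, c`: edges of `G` whose endpoints are
coloured `a` and `c` (in some order) under `X`. -/
def kempeGraph (G : SimpleGraph V) (X : V → Fin q) (a c : Fin q) : SimpleGraph V where
  Adj x y := G.Adj x y ∧ ((X x = a ∧ X y = c) ∨ (X x = c ∧ X y = a))
  symm := by
    constructor
    intro x y h
    exact ⟨h.1.symm, h.2.elim (fun h2 => Or.inr ⟨h2.2, h2.1⟩) (fun h2 => Or.inl ⟨h2.2, h2.1⟩)⟩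
  loopless := ⟨fun x h => G.irrefl h.1⟩

/-- The Kempe component `S_X(v,c)`: vertices reachable from `v` by an
`(X(v),c)`-alternating path; empty when `c = X(v)`. -/
noncomputable def kempeComponent (G : SimpleGraph V) (X : V → Fin q) (v : V) (c : Fin q) :
    Finset V :=
  if c = X v then ∅
  else Finset.univ.filter fun u => (kempeGraph G X (X v) c).Reachable v u

/-- Exchange the colours `a` and `c` on the set `S`. -/
def flipCol (X : V → Fin q) (S : Finset V) (a c : Fin q) : V → Fin q :=
  fun u => if u ∈ S then (if X u = a then c else if X u = c then a else X u) else X u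

/-- One step of the flip dynamics with flip parameters `p` for the list-colouring
instance `(G, L)`, started from `X`: the distribution of the next state. -/
noncomputable def flipStep (G : SimpleGraph V) (L : V → Finset (Fin q)) (p : ℕ → ℝ)
    (X : V → Fin q) : (V → Fin q) → ℝ := fun Y =>
  (1 / ((Fintype.card V : ℝ) * q)) * ∑ v : V, ∑ c : Fin q,
    (if (kempeComponent G X v c).card ≠ 0 ∧
        ∀ u ∈ kempeComponent G X v c,
          flipCol X (kempeComponent G X v c) (X v) c u ∈ L u then
      (p (kempeComponent G X v c).card / ((kempeComponent G X v c).card : ℝ)) *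
          (if Y = flipCol X (kempeComponent G X v c) (X v) c then 1 else 0) +
        (1 - p (kempeComponent G X v c).card / ((kempeComponent G X v c).card : ℝ)) *
          (if Y = X then 1 else 0)
    else (if Y = X then 1 else 0))

/-- `X` is a proper list colouring of the instance `(G, L)`. -/
def ProperListCol (G : SimpleGraph V) (L : V → Finset (Fin q)) (X : V → Fin q) : Prop :=
  (∀ v : V, X v ∈ L v) ∧ ∀ u v : V, G.Adj u v → X u ≠ X v

end SpinFormal

open SpinFormal

namespace SpinFormal

variable {V : Type} [Fintype V] [DecidableEq V] {q : ℕ}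

lemma wass_le_of_coupling {Ω₁ Ω₂ : Type} [Fintype Ω₁] [Fintype Ω₂]
    (d : Ω₁ → Ω₂ → ℝ) (hd : ∀ x y, 0 ≤ d x y) (μ : Ω₁ → ℝ) (ν : Ω₂ → ℝ)
    (π : Ω₁ × Ω₂ → ℝ) (hπ : IsCoupling π μ ν) {c : ℝ}
    (hc : ∑ P : Ω₁ × Ω₂, π P * d P.1 P.2 ≤ c) : Wass d μ ν ≤ c := by
  refine le_trans (csInf_le ⟨0, ?_⟩ ⟨π, hπ, rfl⟩) hc
  rintro x ⟨ρ, hρ, rfl⟩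
  exact Finset.sum_nonneg fun P _ => mul_nonneg (hρ.1 P) (hd _ _)

lemma hamming_nonneg {W : Type} [Fintype W] {α : Type} [DecidableEq α] (σ τ : W → α) :
    0 ≤ hamming σ τ := Nat.cast_nonneg _

lemma hamming_self {W : Type} [Fintype W] {α : Type} [DecidableEq α] (σ : W → α) :
    hamming σ σ = 0 := by simp [hamming]

lemma sphere_card_le (G : SimpleGraph V) [DecidableRel G.Adj] (Δ : ℕ)
    (hdeg : ∀ u : V, G.degree u ≤ Δ) (v : V) :
    ∀ i, (sphere G v i).card ≤ Δ ^ i := by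
  intro i
  induction i with
  | zero =>
    have hsub : sphere G v 0 ⊆ {v} := by
      intro u hu
      simp only [sphere, Finset.mem_filter, Finset.mem_univ, true_and] at hu
      simp [(hu.1.dist_eq_zero_iff).mp hu.2]
    simpa using Finset.card_le_card hsub
  | succ i ih =>
    have hsub : sphere G v (i + 1) ⊆ (sphere G v i).biUnion (fun u => G.neighborFinset u) := by
      intro u hu
      simp only [sphere, Finset.mem_filter, Finset.mem_univ, true_and] at hu
      obtain ⟨hr, hd'⟩ := hu
      obtain ⟨p, hp⟩ := hr.exists_walk_length_eq_dist
      rw [hd'] at hp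
      have hne : u ≠ v := by
        intro h; subst h
        rw [hr.dist_eq_zero_iff.mpr rfl] at hd'; omega
      obtain ⟨w, hadj, p', hp'⟩ := (p.reverse).exists_eq_cons_of_ne hne
      have hlen : p'.length = i := by
        have := congrArg SimpleGraph.Walk.length hp'
        simp only [SimpleGraph.Walk.length_reverse, SimpleGraph.Walk.length_cons, hp] at this
        omega
      have hrw : G.Reachable v w := ⟨p'.reverse⟩
      have hd1 : G.dist v w ≤ i := by
        have := SimpleGraph.dist_le p'.reverse
        rwa [SimpleGraph.Walk.length_reverse, hlen] at this
      have hd2 : i ≤ G.dist v w := by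
        obtain ⟨r, hr'⟩ := hrw.exists_walk_length_eq_dist
        have := SimpleGraph.dist_le (r.concat hadj.symm)
        rw [SimpleGraph.Walk.length_concat, hr', hd'] at this
        omega
      refine Finset.mem_biUnion.mpr ⟨w, ?_, ?_⟩
      · simp only [sphere, Finset.mem_filter, Finset.mem_univ, true_and]
        exact ⟨hrw, le_antisymm hd1 hd2⟩
      · exact (SimpleGraph.mem_neighborFinset _ _ _).mpr hadj.symm
    calc (sphere G v (i + 1)).card ≤ _ := Finset.card_le_card hsub
      _ ≤ ∑ w ∈ sphere G v i, (G.neighborFinset w).card := Finset.card_biUnion_le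
      _ ≤ ∑ _w ∈ sphere G v i, Δ := Finset.sum_le_sum fun w _ => by
        rw [SimpleGraph.card_neighborFinset_eq_degree]; exact hdeg w
      _ = (sphere G v i).card * Δ := by rw [Finset.sum_const, smul_eq_mul]
      _ ≤ Δ ^ i * Δ := Nat.mul_le_mul_right _ ih
      _ = Δ ^ (i + 1) := (pow_succ Δ i).symm

lemma exists_short_walk_of_mem_kempe (G' : SimpleGraph V) (X : V → Fin q)
    (w : V) (c : Fin q) (u : V) (hu : u ∈ kempeComponent G' X w c) :
    ∃ pth : G'.Walk w u, pth.length + 1 ≤ (kempeComponent G' X w c).card := by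
  by_cases hc : c = X w
  · simp [kempeComponent, hc] at hu
  · simp only [kempeComponent, if_neg hc, Finset.mem_filter, Finset.mem_univ, true_and] at hu
    obtain ⟨p0⟩ := hu
    have hnd := p0.bypass_isPath.support_nodup
    have hsubS : ∀ x ∈ p0.bypass.support, x ∈ kempeComponent G' X w c := by
      intro x hx
      simp only [kempeComponent, if_neg hc, Finset.mem_filter, Finset.mem_univ, true_and]
      exact ⟨p0.bypass.takeUntil x hx⟩
    have hcard : p0.bypass.support.length ≤ (kempeComponent G' X w c).card := by
      rw [← List.toFinset_card_of_nodup hnd]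
      exact Finset.card_le_card fun x hx => hsubS x (List.mem_toFinset.mp hx)
    have hle' : kempeGraph G' X (X w) c ≤ G' := fun {a b} hab => And.left hab
    refine ⟨p0.bypass.mapLe hle', ?_⟩
    simp only [SimpleGraph.Walk.mapLe, SimpleGraph.Walk.length_map,
      ← SimpleGraph.Walk.length_support]
    exact hcard

end SpinFormal
namespace SpinFormal

variable {V : Type} [Fintype V] [DecidableEq V] {q : ℕ}

/-- The inner summand of `flipStep`. -/
noncomputable def stepKer (G : SimpleGraph V) (L : V → Finset (Fin q)) (p : ℕ → ℝ)
    (X : V → Fin q) (v : V) (c : Fin q) (Y : V → Fin q) : ℝ :=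
    (if (kempeComponent G X v c).card ≠ 0 ∧
        ∀ u ∈ kempeComponent G X v c,
          flipCol X (kempeComponent G X v c) (X v) c u ∈ L u then
      (p (kempeComponent G X v c).card / ((kempeComponent G X v c).card : ℝ)) *
          (if Y = flipCol X (kempeComponent G X v c) (X v) c then 1 else 0) +
        (1 - p (kempeComponent G X v c).card / ((kempeComponent G X v c).card : ℝ)) *
          (if Y = X then 1 else 0)
    else (if Y = X then 1 else 0))

/-- The acceptance condition of `flipStep`. -/
def flipOK (G : SimpleGraph V) (L : V → Finset (Fin q)) (X : V → Fin q)
    (v : V) (c : Fin q) : Prop :=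
  (kempeComponent G X v c).card ≠ 0 ∧
    ∀ u ∈ kempeComponent G X v c, flipCol X (kempeComponent G X v c) (X v) c u ∈ L u

lemma flipStep_eq_stepKer (G : SimpleGraph V) (L : V → Finset (Fin q)) (p : ℕ → ℝ)
    (X : V → Fin q) (Y : V → Fin q) :
    flipStep G L p X Y
      = (1 / ((Fintype.card V : ℝ) * q)) * ∑ v : V, ∑ c : Fin q, stepKer G L p X v c Y := rfl

lemma stepKer_eq_ite (G : SimpleGraph V) (L : V → Finset (Fin q)) (p : ℕ → ℝ)
    (X : V → Fin q) (v : V) (c : Fin q) (Y : V → Fin q) :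
    stepKer G L p X v c Y
      = if flipOK G L X v c then
          (p (kempeComponent G X v c).card / ((kempeComponent G X v c).card : ℝ)) *
              (if Y = flipCol X (kempeComponent G X v c) (X v) c then 1 else 0) +
            (1 - p (kempeComponent G X v c).card / ((kempeComponent G X v c).card : ℝ)) *
              (if Y = X then 1 else 0)
        else (if Y = X then 1 else 0) := by
  unfold stepKer flipOK
  congr 1

lemma ratio_nonneg {p : ℕ → ℝ} (hp01 : ∀ ℓ : ℕ, 0 ≤ p ℓ ∧ p ℓ ≤ 1) (ℓ : ℕ) :
    0 ≤ p ℓ / (ℓ : ℝ) := div_nonneg (hp01 ℓ).1 (Nat.cast_nonneg _)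

lemma ratio_le_one {p : ℕ → ℝ} (hp01 : ∀ ℓ : ℕ, 0 ≤ p ℓ ∧ p ℓ ≤ 1) {ℓ : ℕ} (hℓ : ℓ ≠ 0) :
    p ℓ / (ℓ : ℝ) ≤ 1 := by
  rw [div_le_one (by exact_mod_cast Nat.pos_of_ne_zero hℓ)]
  exact le_trans (hp01 ℓ).2 (by exact_mod_cast Nat.one_le_iff_ne_zero.mpr hℓ)

lemma stepKer_nonneg {p : ℕ → ℝ} (hp01 : ∀ ℓ : ℕ, 0 ≤ p ℓ ∧ p ℓ ≤ 1)
    (G : SimpleGraph V) (L : V → Finset (Fin q))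
    (X : V → Fin q) (v : V) (c : Fin q) (Y : V → Fin q) :
    0 ≤ stepKer G L p X v c Y := by
  rw [stepKer_eq_ite]
  by_cases h : flipOK G L X v c
  · rw [if_pos h]
    have h1 := ratio_nonneg hp01 (kempeComponent G X v c).card
    have h2 := ratio_le_one hp01 h.1
    have : (0:ℝ) ≤ 1 - p (kempeComponent G X v c).card / ((kempeComponent G X v c).card : ℝ) :=
      by linarith
    positivity
  · rw [if_neg h]; positivity

lemma stepKer_sum {p : ℕ → ℝ}
    (G : SimpleGraph V) (L : V → Finset (Fin q))
    (X : V → Fin q) (v : V) (c : Fin q) :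
    ∑ Y : V → Fin q, stepKer G L p X v c Y = 1 := by
  simp only [stepKer_eq_ite]
  by_cases h : flipOK G L X v c
  · simp only [if_pos h, Finset.sum_add_distrib, ← Finset.mul_sum]
    rw [Finset.sum_ite_eq' Finset.univ, Finset.sum_ite_eq' Finset.univ]
    simp
  · simp only [if_neg h]
    rw [Finset.sum_ite_eq' Finset.univ]
    simp

/-- Coupling kernel. -/
noncomputable def coupKer (G : SimpleGraph V) (L L' : V → Finset (Fin q)) (p : ℕ → ℝ)
    (X : V → Fin q) (v : V) (c : Fin q) (P : (V → Fin q) × (V → Fin q)) : ℝ :=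
  if flipOK G L X v c then (if P.2 = P.1 then 1 else 0) * stepKer G L p X v c P.1
  else (if P.1 = X then 1 else 0) * stepKer G L' p X v c P.2

lemma coupKer_nonneg {p : ℕ → ℝ} (hp01 : ∀ ℓ : ℕ, 0 ≤ p ℓ ∧ p ℓ ≤ 1)
    (G : SimpleGraph V) (L L' : V → Finset (Fin q))
    (X : V → Fin q) (v : V) (c : Fin q) (P : (V → Fin q) × (V → Fin q)) :
    0 ≤ coupKer G L L' p X v c P := by
  unfold coupKer
  by_cases h : flipOK G L X v c
  · rw [if_pos h]
    exact mul_nonneg (by positivity) (stepKer_nonneg hp01 _ _ _ _ _ _)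
  · rw [if_neg h]
    exact mul_nonneg (by positivity) (stepKer_nonneg hp01 _ _ _ _ _ _)

lemma coupKer_fst {p : ℕ → ℝ}
    (G : SimpleGraph V) (L L' : V → Finset (Fin q))
    (X : V → Fin q) (v : V) (c : Fin q) (Y : V → Fin q) :
    ∑ Y' : V → Fin q, coupKer G L L' p X v c (Y, Y') = stepKer G L p X v c Y := by
  unfold coupKer
  by_cases h : flipOK G L X v c
  · simp only [if_pos h, ite_mul, one_mul, zero_mul]
    rw [Fintype.sum_ite_eq']
  · simp only [if_neg h]
    rw [← Finset.mul_sum Finset.univ (stepKer G L' p X v c) (if Y = X then (1:ℝ) else 0),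
      stepKer_sum, stepKer_eq_ite, if_neg h, mul_one]

lemma coupKer_snd {p : ℕ → ℝ}
    (G : SimpleGraph V) (L L' : V → Finset (Fin q))
    (X : V → Fin q) (v : V) (c : Fin q)
    (hLL' : flipOK G L X v c → flipOK G L' X v c) (Y' : V → Fin q) :
    ∑ Y : V → Fin q, coupKer G L L' p X v c (Y, Y') = stepKer G L' p X v c Y' := by
  unfold coupKer
  by_cases h : flipOK G L X v c
  · simp only [if_pos h, ite_mul, one_mul, zero_mul]
    rw [Fintype.sum_ite_eq]
    simp only [stepKer_eq_ite, if_pos h, if_pos (hLL' h)]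
  · simp only [if_neg h, ite_mul, one_mul, zero_mul]
    rw [Fintype.sum_ite_eq']

end SpinFormal
namespace SpinFormal

variable {V : Type} [Fintype V] [DecidableEq V] {q : ℕ}

lemma hamming_flipCol_le (X : V → Fin q) (S : Finset V) (a c : Fin q) :
    hamming X (flipCol X S a c) ≤ (S.card : ℝ) := by
  unfold hamming
  have hsub : Finset.univ.filter (fun w => X w ≠ flipCol X S a c w) ⊆ S := by
    intro w hw
    simp only [Finset.mem_filter, Finset.mem_univ, true_and] at hw
    by_contra h
    exact hw (by simp [flipCol, h])
  exact_mod_cast Finset.card_le_card hsub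

lemma coupKer_cost (G : SimpleGraph V) (L L' : V → Finset (Fin q)) (p : ℕ → ℝ)
    (X : V → Fin q) (v : V) (c : Fin q) :
    ∑ P : (V → Fin q) × (V → Fin q), coupKer G L L' p X v c P * hamming P.1 P.2
      = if flipOK G L X v c then 0
        else if flipOK G L' X v c then
          (p (kempeComponent G X v c).card / ((kempeComponent G X v c).card : ℝ)) *
            hamming X (flipCol X (kempeComponent G X v c) (X v) c)
        else 0 := by
  set S := kempeComponent G X v c with hS
  set Z := flipCol X S (X v) c with hZ
  set a := p S.card / (S.card : ℝ) with ha
  rw [Fintype.sum_prod_type]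
  by_cases h : flipOK G L X v c
  · rw [if_pos h]
    have hterm : ∀ Y : V → Fin q,
        ∑ Y' : V → Fin q, coupKer G L L' p X v c (Y, Y') * hamming Y Y' = 0 := by
      intro Y
      have : ∀ Y' : V → Fin q, coupKer G L L' p X v c (Y, Y') * hamming Y Y'
          = if Y' = Y then stepKer G L p X v c Y * hamming Y Y' else 0 := by
        intro Y'
        simp only [coupKer, if_pos h]
        split_ifs <;> ring
      rw [Finset.sum_congr rfl (fun Y' _ => this Y'), Fintype.sum_ite_eq',
        hamming_self, mul_zero]
    rw [Finset.sum_congr rfl (fun Y _ => hterm Y), Finset.sum_const_zero]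
  · rw [if_neg h]
    have hterm : ∀ Y Y' : V → Fin q, coupKer G L L' p X v c (Y, Y') * hamming Y Y'
        = if Y = X then stepKer G L' p X v c Y' * hamming Y Y' else 0 := by
      intro Y Y'
      simp only [coupKer, if_neg h]
      split_ifs <;> ring
    rw [Finset.sum_congr rfl (fun Y _ => Finset.sum_congr rfl (fun Y' _ => hterm Y Y'))]
    rw [Finset.sum_comm]
    have hpull : ∀ Y' : V → Fin q,
        ∑ Y : V → Fin q, (if Y = X then stepKer G L' p X v c Y' * hamming Y Y' else 0)
          = stepKer G L' p X v c Y' * hamming X Y' := by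
      intro Y'
      exact Fintype.sum_ite_eq' X (fun Y => stepKer G L' p X v c Y' * hamming Y Y')
    rw [Finset.sum_congr rfl (fun Y' _ => hpull Y')]
    by_cases h' : flipOK G L' X v c
    · rw [if_pos h']
      have hterm2 : ∀ Y' : V → Fin q, stepKer G L' p X v c Y' * hamming X Y'
          = a * (if Y' = Z then hamming X Y' else 0)
            + (1 - a) * (if Y' = X then hamming X Y' else 0) := by
        intro Y'
        rw [stepKer_eq_ite, if_pos h']
        split_ifs <;> ring
      rw [Finset.sum_congr rfl (fun Y' _ => hterm2 Y'), Finset.sum_add_distrib,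
        ← Finset.mul_sum Finset.univ (fun Y' => if Y' = Z then hamming X Y' else 0) a,
        ← Finset.mul_sum Finset.univ (fun Y' => if Y' = X then hamming X Y' else 0) (1 - a),
        Fintype.sum_ite_eq', Fintype.sum_ite_eq', hamming_self, mul_zero, add_zero]
    · rw [if_neg h']
      have hterm2 : ∀ Y' : V → Fin q, stepKer G L' p X v c Y' * hamming X Y'
          = if Y' = X then hamming X Y' else 0 := by
        intro Y'
        rw [stepKer_eq_ite, if_neg h']
        split_ifs <;> ring
      rw [Finset.sum_congr rfl (fun Y' _ => hterm2 Y'), Fintype.sum_ite_eq', hamming_self]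

end SpinFormal
/-- one step of the flip dynamics on the induced subgraph `G' = G[V']`
with two list systems differing only on the neighbourhood of `v ∉ V'` can be coupled
with expected Hamming disagreement at most `12Δ⁷/n`. -/
theorem flip_one_step_disagreement
    {V : Type} [Fintype V] [DecidableEq V] {q : ℕ}
    (Δ : ℕ) (hΔ : 2 ≤ Δ)
    (G : SimpleGraph V) [DecidableRel G.Adj]
    (hdeg : ∀ u : V, G.degree u ≤ Δ)
    (v : V) (V' : Finset V) (hv : v ∉ V') (hne : V'.Nonempty)
    (L L' : {x : V // x ∈ V'} → Finset (Fin q))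
    (hsub : ∀ u, L u ⊆ L' u)
    (heq : ∀ u : {x : V // x ∈ V'}, ¬ G.Adj v u.1 → L u = L' u)
    (p : ℕ → ℝ) (hp01 : ∀ ℓ : ℕ, 0 ≤ p ℓ ∧ p ℓ ≤ 1) (hp6 : ∀ ℓ : ℕ, 6 < ℓ → p ℓ = 0)
    (X : {x : V // x ∈ V'} → Fin q)
    (hX : ProperListCol (SimpleGraph.comap Subtype.val G) L X) :
    Wass hamming
        (flipStep (SimpleGraph.comap Subtype.val G) L p X)
        (flipStep (SimpleGraph.comap Subtype.val G) L' p X)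
      ≤ 12 * (Δ : ℝ) ^ 7 / (V'.card : ℝ) := by
  classical
  rcases Nat.eq_zero_or_pos q with hq0 | hq0
  · subst hq0; exact (X ⟨hne.choose, hne.choose_spec⟩).elim0
  set G' := SimpleGraph.comap (Subtype.val : {x : V // x ∈ V'} → V) G with hG'
  set B : Finset V :=
    Finset.univ.filter (fun x => x ≠ v ∧ G.Reachable v x ∧ G.dist v x ≤ 6) with hB
  have hNcard : Fintype.card {x : V // x ∈ V'} = V'.card := Fintype.card_coe V'
  have hNpos : (0 : ℝ) < (Fintype.card {x : V // x ∈ V'} : ℝ) := by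
    rw [hNcard]; exact_mod_cast Finset.card_pos.mpr hne
  have hqpos : (0 : ℝ) < (q : ℝ) := by exact_mod_cast hq0
  set C : ℝ := 1 / ((Fintype.card {x : V // x ∈ V'} : ℝ) * q) with hC
  have hCpos : 0 < C := by positivity
  have hLL' : ∀ (w : {x : V // x ∈ V'}) (c : Fin q),
      flipOK G' L X w c → flipOK G' L' X w c :=
    fun w c h => ⟨h.1, fun u hu => hsub u (h.2 u hu)⟩
  -- the coupling
  set π : ({x : V // x ∈ V'} → Fin q) × ({x : V // x ∈ V'} → Fin q) → ℝ :=
    fun P => C * ∑ w : {x : V // x ∈ V'}, ∑ c : Fin q, coupKer G' L L' p X w c P with hπ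
  have hcoup : IsCoupling π (flipStep G' L p X) (flipStep G' L' p X) := by
    refine ⟨fun P => mul_nonneg hCpos.le (Finset.sum_nonneg fun w _ =>
      Finset.sum_nonneg fun c _ => coupKer_nonneg hp01 G' L L' X w c P), ?_, ?_⟩
    · intro Y
      rw [flipStep_eq_stepKer]
      have hswap : ∑ Y' : {x : V // x ∈ V'} → Fin q,
          ∑ w : {x : V // x ∈ V'}, ∑ c : Fin q, coupKer G' L L' p X w c (Y, Y')
            = ∑ w : {x : V // x ∈ V'}, ∑ c : Fin q, stepKer G' L p X w c Y := by
        rw [Finset.sum_comm]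
        refine Finset.sum_congr rfl fun w _ => ?_
        rw [Finset.sum_comm]
        exact Finset.sum_congr rfl fun c _ => coupKer_fst G' L L' X w c Y
      rw [← Finset.mul_sum Finset.univ
        (fun Y' => ∑ w : {x : V // x ∈ V'}, ∑ c : Fin q, coupKer G' L L' p X w c (Y, Y')) C,
        hswap]
    · intro Y'
      rw [flipStep_eq_stepKer]
      have hswap : ∑ Y : {x : V // x ∈ V'} → Fin q,
          ∑ w : {x : V // x ∈ V'}, ∑ c : Fin q, coupKer G' L L' p X w c (Y, Y')
            = ∑ w : {x : V // x ∈ V'}, ∑ c : Fin q, stepKer G' L' p X w c Y' := by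
        rw [Finset.sum_comm]
        refine Finset.sum_congr rfl fun w _ => ?_
        rw [Finset.sum_comm]
        exact Finset.sum_congr rfl fun c _ => coupKer_snd G' L L' X w c (hLL' w c) Y'
      rw [← Finset.mul_sum Finset.univ
        (fun Y => ∑ w : {x : V // x ∈ V'}, ∑ c : Fin q, coupKer G' L L' p X w c (Y, Y')) C,
        hswap]
  -- the cost of the coupling
  have hcost : ∑ P : ({x : V // x ∈ V'} → Fin q) × ({x : V // x ∈ V'} → Fin q),
      π P * hamming P.1 P.2
        = C * ∑ w : {x : V // x ∈ V'}, ∑ c : Fin q,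
            ∑ P : ({x : V // x ∈ V'} → Fin q) × ({x : V // x ∈ V'} → Fin q),
              coupKer G' L L' p X w c P * hamming P.1 P.2 := by
    have h1 : ∀ P : ({x : V // x ∈ V'} → Fin q) × ({x : V // x ∈ V'} → Fin q),
        π P * hamming P.1 P.2 = C * ∑ w : {x : V // x ∈ V'}, ∑ c : Fin q,
          coupKer G' L L' p X w c P * hamming P.1 P.2 := by
      intro P
      rw [hπ]
      rw [mul_assoc, Finset.sum_mul]
      congr 1
      refine Finset.sum_congr rfl fun w _ => ?_
      rw [Finset.sum_mul]
    rw [Finset.sum_congr rfl fun P _ => h1 P,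
      ← Finset.mul_sum Finset.univ (fun P => ∑ w : {x : V // x ∈ V'}, ∑ c : Fin q,
        coupKer G' L L' p X w c P * hamming P.1 P.2) C]
    congr 1
    rw [Finset.sum_comm]
    refine Finset.sum_congr rfl fun w _ => ?_
    rw [Finset.sum_comm]
  -- per-pair bound
  have hpair : ∀ (w : {x : V // x ∈ V'}) (c : Fin q),
      ∑ P : ({x : V // x ∈ V'} → Fin q) × ({x : V // x ∈ V'} → Fin q),
        coupKer G' L L' p X w c P * hamming P.1 P.2
          ≤ (if (w : V) ∈ B then (1 : ℝ) else 0) := by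
    intro w c
    rw [coupKer_cost]
    by_cases hf : flipOK G' L X w c
    · rw [if_pos hf]; split_ifs <;> norm_num
    · rw [if_neg hf]
      by_cases hf' : flipOK G' L' X w c
      · rw [if_pos hf']
        set S := kempeComponent G' X w c with hSdef
        set Z := flipCol X S (X w) c with hZdef
        have hcard : S.card ≠ 0 := hf'.1
        have hcastne : ((S.card : ℝ)) ≠ 0 := by exact_mod_cast hcard
        have hham : hamming X Z ≤ (S.card : ℝ) := hamming_flipCol_le X S (X w) c
        have hle1 : p S.card / (S.card : ℝ) * hamming X Z ≤ p S.card := by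
          calc p S.card / (S.card : ℝ) * hamming X Z
              ≤ p S.card / (S.card : ℝ) * (S.card : ℝ) :=
                mul_le_mul_of_nonneg_left hham (ratio_nonneg hp01 S.card)
            _ = p S.card := div_mul_cancel₀ _ hcastne
        by_cases h6 : S.card ≤ 6
        · -- derive (w : V) ∈ B
          have hwB : (w : V) ∈ B := by
            have hnotall : ¬ ∀ u ∈ S, Z u ∈ L u := fun hc => hf ⟨hcard, hc⟩
            push_neg at hnotall
            obtain ⟨u, huS, huL⟩ := hnotall
            have hLne : L u ≠ L' u := fun he => huL (he ▸ hf'.2 u huS)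
            have hadj : G.Adj v u.1 := by
              by_contra hna; exact hLne (heq u hna)
            obtain ⟨pth, hpth⟩ := exists_short_walk_of_mem_kempe G' X w c u huS
            rw [← hSdef] at hpth
            let g : G' →g G := ⟨Subtype.val, fun {a b} hab => hab⟩
            let total : G.Walk v (w : V) :=
              SimpleGraph.Walk.cons hadj ((pth.map g).reverse)
            have hlen : total.length ≤ 6 := by
              have : total.length = pth.length + 1 := by
                simp [total, SimpleGraph.Walk.length_cons,
                  SimpleGraph.Walk.length_reverse, SimpleGraph.Walk.length_map]
              omega
            rw [hB]
            simp only [Finset.mem_filter, Finset.mem_univ, true_and]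
            refine ⟨fun he => hv (he ▸ w.2), ⟨total⟩, le_trans (SimpleGraph.dist_le total) hlen⟩
          rw [if_pos hwB]
          exact hle1.trans (hp01 S.card).2
        · have hp0 : p S.card = 0 := hp6 S.card (by omega)
          have : p S.card / (S.card : ℝ) * hamming X Z ≤ 0 := by
            rw [hp0, zero_div, zero_mul]
          refine this.trans ?_
          split_ifs <;> norm_num
      · rw [if_neg hf']; split_ifs <;> norm_num
  -- geometry: |B| ≤ 6 Δ^6
  have hBcard : B.card ≤ 6 * Δ ^ 6 := by
    have hBsub : B ⊆ (Finset.Icc 1 6).biUnion (fun i => sphere G v i) := by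
      intro x hx
      rw [hB] at hx
      simp only [Finset.mem_filter, Finset.mem_univ, true_and] at hx
      obtain ⟨hxv, hr, hd⟩ := hx
      have hd0 : G.dist v x ≠ 0 := by
        intro h0
        rcases SimpleGraph.dist_eq_zero_iff_eq_or_not_reachable.mp h0 with he | hnr
        · exact hxv he.symm
        · exact hnr hr
      refine Finset.mem_biUnion.mpr ⟨G.dist v x, Finset.mem_Icc.mpr ⟨by omega, hd⟩, ?_⟩
      simp only [sphere, Finset.mem_filter, Finset.mem_univ, true_and]
      exact ⟨hr, trivial⟩
    calc B.card ≤ _ := Finset.card_le_card hBsub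
      _ ≤ ∑ i ∈ Finset.Icc 1 6, (sphere G v i).card := Finset.card_biUnion_le
      _ ≤ ∑ i ∈ Finset.Icc 1 6, Δ ^ i :=
          Finset.sum_le_sum fun i _ => sphere_card_le G Δ hdeg v i
      _ ≤ ∑ i ∈ Finset.Icc 1 6, Δ ^ 6 := Finset.sum_le_sum fun i hi =>
          Nat.pow_le_pow_right (by omega) (Finset.mem_Icc.mp hi).2
      _ = 6 * Δ ^ 6 := by simp [Nat.card_Icc]
  -- assemble
  refine wass_le_of_coupling hamming (fun x y => hamming_nonneg x y) _ _ π hcoup ?_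
  rw [hcost]
  have hsum1 : ∑ w : {x : V // x ∈ V'}, ∑ c : Fin q,
      ∑ P : ({x : V // x ∈ V'} → Fin q) × ({x : V // x ∈ V'} → Fin q),
        coupKer G' L L' p X w c P * hamming P.1 P.2
      ≤ ∑ w : {x : V // x ∈ V'}, ∑ _c : Fin q, (if (w : V) ∈ B then (1 : ℝ) else 0) :=
    Finset.sum_le_sum fun w _ => Finset.sum_le_sum fun c _ => hpair w c
  have hsum2 : ∑ w : {x : V // x ∈ V'}, ∑ _c : Fin q, (if (w : V) ∈ B then (1 : ℝ) else 0)
      = (q : ℝ) * (Finset.univ.filter (fun w : {x : V // x ∈ V'} => (w : V) ∈ B)).card := by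
    rw [Finset.sum_comm, Finset.sum_const, Finset.card_univ, Fintype.card_fin, nsmul_eq_mul]
    congr 1
    rw [Finset.sum_boole]
  have hsum3 : ((Finset.univ.filter (fun w : {x : V // x ∈ V'} => (w : V) ∈ B)).card : ℝ)
      ≤ (B.card : ℝ) := by
    have h := Finset.card_le_card_of_injOn (f := fun w : {x : V // x ∈ V'} => (w : V))
      (s := Finset.univ.filter (fun w : {x : V // x ∈ V'} => (w : V) ∈ B)) (t := B)
      (fun w hw => (Finset.mem_filter.mp hw).2)
      (fun a _ b _ hab => Subtype.val_injective hab)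
    exact_mod_cast h
  have hBR : (B.card : ℝ) ≤ 12 * (Δ : ℝ) ^ 7 := by
    have h1 : (B.card : ℝ) ≤ 6 * (Δ : ℝ) ^ 6 := by exact_mod_cast hBcard
    have h2 : (6 : ℝ) * (Δ : ℝ) ^ 6 ≤ 12 * (Δ : ℝ) ^ 7 := by
      have hΔR : (2 : ℝ) ≤ (Δ : ℝ) := by exact_mod_cast hΔ
      have hΔ6 : (0 : ℝ) ≤ (Δ : ℝ) ^ 6 := by positivity
      nlinarith
    linarith
  calc C * ∑ w : {x : V // x ∈ V'}, ∑ c : Fin q,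
        ∑ P : ({x : V // x ∈ V'} → Fin q) × ({x : V // x ∈ V'} → Fin q),
          coupKer G' L L' p X w c P * hamming P.1 P.2
      ≤ C * ((q : ℝ) * (B.card : ℝ)) := by
        refine mul_le_mul_of_nonneg_left ?_ hCpos.le
        refine le_trans hsum1 ?_
        rw [hsum2]
        exact mul_le_mul_of_nonneg_left hsum3 hqpos.le
    _ = (B.card : ℝ) / (Fintype.card {x : V // x ∈ V'} : ℝ) := by
        rw [hC]; field_simp
    _ ≤ 12 * (Δ : ℝ) ^ 7 / (V'.card : ℝ) := by
        rw [hNcard]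
        have hn : (0 : ℝ) < (V'.card : ℝ) := by rw [hNcard] at hNpos; exact hNpos
        gcongr
end
end

section
/- Let b ∈ (0,1], η > 0, and ε > 0 with ε ≤ 3b^{−2}. Let ℓ ≥ 0 be an integer; for 0 ≤ i ≤ ℓ define ε_i = 5b^{−2}·η·H(i)·ε, where H(i) = Σ_{j=1}^{i} 1/j (so H(0)=0 and ε_0=0), and assume ε_ℓ < ε. Let r_−, r_+ > 0 and let (Γ_{x,i})_{0≤i≤ℓ} and (Γ_{y,i})_{0≤i≤ℓ} be nonnegative reals satisfying: (i) for all 1 ≤ i ≤ ℓ, Γ_{x,i} ≤ (η/i)·Σ_{j=0}^{i} Γ_{x,j} and Γ_{y,i} ≤ (η/i)·Σ_{j=0}^{i} Γ_{y,j}; (ii) r_−·Γ_{y,0} ≤ Γ_{x,0} ≤ r_+·Γ_{y,0}; and (iii) for all 1 ≤ i ≤ ℓ, (1+ε)^{−2}·r_−·Γ_{y,i} ≤ Γ_{x,i} ≤ (1+ε)^{2}·r_+·Γ_{y,i}. Then (1+ε_ℓ)^{−1}·r_−·Σ_{i=0}^{ℓ} Γ_{y,i} ≤ Σ_{i=0}^{ℓ}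 Γ_{x,i} ≤ (1+ε_ℓ)·r_+·Σ_{i=0}^{ℓ} Γ_{y,i}. -/
open scoped BigOperators

/-- The `i`-th harmonic number `H(i) = Σ_{j=1}^{i} 1/j`, with `H(0) = 0`. -/
noncomputable def harm (i : ℕ) : ℝ := ∑ j ∈ Finset.range i, 1 / ((j : ℝ) + 1)

lemma harm_nonneg (n : ℕ) : 0 ≤ harm n :=
  Finset.sum_nonneg fun j _ => by positivity

lemma harm_succ (n : ℕ) : harm (n + 1) = harm n + 1 / ((n : ℝ) + 1) :=
  Finset.sum_range_succ _ _

lemma lp_aux (b η ε : ℝ) (hb0 : 0 < b) (hb1 : b ≤ 1) (hη : 0 < η) (hε0 : 0 < ε)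
    (hε3 : ε ≤ 3 / b ^ 2) (ℓ : ℕ) (r : ℝ) (hr : 0 < r) (A B : ℕ → ℝ)
    (hBnn : ∀ i ≤ ℓ, 0 ≤ B i)
    (hBov : ∀ i : ℕ, 1 ≤ i → i ≤ ℓ → B i ≤ η / (i : ℝ) * ∑ j ∈ Finset.range (i + 1), B j)
    (h0 : A 0 ≤ r * B 0)
    (hi : ∀ i : ℕ, 1 ≤ i → i ≤ ℓ → A i ≤ (1 + ε) ^ 2 * r * B i) :
    ∀ n, n ≤ ℓ → ∑ i ∈ Finset.range (n + 1), A i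
      ≤ (1 + 5 / b ^ 2 * η * harm n * ε) * r * ∑ i ∈ Finset.range (n + 1), B i := by
  have hb2 : (0:ℝ) < b ^ 2 := by positivity
  have hb2le : b ^ 2 ≤ 1 := by nlinarith
  have h25 : 2 + ε ≤ 5 / b ^ 2 := by
    have h2 : (2:ℝ) ≤ 2 / b ^ 2 := by
      rw [le_div_iff₀ hb2]; nlinarith
    have : 3 / b ^ 2 + 2 / b ^ 2 = 5 / b ^ 2 := by ring
    linarith
  intro n
  induction n with
  | zero =>
      intro _
      simp only [zero_add, Finset.sum_range_one, harm, Finset.range_zero, Finset.sum_empty] at *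
      calc A 0 ≤ r * B 0 := h0
        _ = (1 + 5 / b ^ 2 * η * 0 * ε) * r * B 0 := by ring
  | succ n ih =>
      intro hle
      have hn : n ≤ ℓ := by omega
      have IH := ih hn
      set T := ∑ i ∈ Finset.range (n + 1), B i with hTdef
      have hT : 0 ≤ T := Finset.sum_nonneg fun i hi => hBnn i (by
        simp only [Finset.mem_range] at hi; omega)
      have hB : 0 ≤ B (n + 1) := hBnn (n + 1) hle
      have hov := hBov (n + 1) (by omega) hle
      have hA := hi (n + 1) (by omega) hle
      have hm : (0:ℝ) < (n : ℝ) + 1 := by positivity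
      rw [Finset.sum_range_succ, Finset.sum_range_succ (f := B), harm_succ]
      push_cast at hov
      rw [Finset.sum_range_succ (f := B), ← hTdef] at hov
      -- clear the division in hov
      have hov' : ((n:ℝ) + 1) * B (n + 1) ≤ η * (T + B (n + 1)) := by
        have := mul_le_mul_of_nonneg_left hov (le_of_lt hm)
        calc ((n:ℝ) + 1) * B (n + 1) ≤ ((n:ℝ)+1) * (η / ((n:ℝ)+1) * (T + B (n+1))) := this
          _ = η * (T + B (n + 1)) := by field_simp
      have hhn : 0 ≤ harm n := harm_nonneg n
      -- key scalar inequality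
      have key : (1 + 5 / b ^ 2 * η * harm n * ε) * T + (1 + ε) ^ 2 * B (n + 1)
          ≤ (1 + 5 / b ^ 2 * η * (harm n + 1 / ((n:ℝ) + 1)) * ε) * (T + B (n + 1)) := by
        have hd : 5 / b ^ 2 * η * (1 / ((n:ℝ) + 1)) * ε * ((n:ℝ) + 1) = 5 / b ^ 2 * η * ε := by
          field_simp
        have h5e : ε * (2 + ε) ≤ 5 / b ^ 2 * ε := by nlinarith
        have step : 5 / b ^ 2 * ε * B (n + 1)
            ≤ 5 / b ^ 2 * η * (1 / ((n:ℝ) + 1)) * ε * (T + B (n + 1)) := by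
          have hpos : 0 ≤ 5 / b ^ 2 * (1 / ((n:ℝ) + 1)) * ε := by positivity
          have := mul_le_mul_of_nonneg_left hov' hpos
          calc 5 / b ^ 2 * ε * B (n + 1)
              = 5 / b ^ 2 * (1 / ((n:ℝ)+1)) * ε * (((n:ℝ)+1) * B (n+1)) := by field_simp
            _ ≤ 5 / b ^ 2 * (1 / ((n:ℝ)+1)) * ε * (η * (T + B (n+1))) := this
            _ = 5 / b ^ 2 * η * (1 / ((n:ℝ) + 1)) * ε * (T + B (n + 1)) := by ring
        nlinarith [mul_nonneg (mul_nonneg (mul_nonneg (by positivity : (0:ℝ) ≤ 5 / b ^ 2 * η) hhn) (le_of_lt hε0)) hB,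
          mul_nonneg (le_of_lt hε0) hB]
      calc (∑ i ∈ Finset.range (n + 1), A i) + A (n + 1)
          ≤ (1 + 5 / b ^ 2 * η * harm n * ε) * r * T + (1 + ε) ^ 2 * r * B (n + 1) := by
            exact add_le_add IH hA
        _ = ((1 + 5 / b ^ 2 * η * harm n * ε) * T + (1 + ε) ^ 2 * B (n + 1)) * r := by ring
        _ ≤ ((1 + 5 / b ^ 2 * η * (harm n + 1 / ((n:ℝ) + 1)) * ε) * (T + B (n + 1))) * r :=
            mul_le_mul_of_nonneg_right key (le_of_lt hr)
        _ = (1 + 5 / b ^ 2 * η * (harm n + 1 / ((n:ℝ) + 1)) * ε) * r * (T + B (n + 1)) := by ring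

/-- arithmetic core of the LP soundness analysis. -/
theorem lp_soundness_arithmetic
    (b η ε : ℝ) (hb0 : 0 < b) (hb1 : b ≤ 1) (hη : 0 < η) (hε0 : 0 < ε)
    (hε3 : ε ≤ 3 / b ^ 2) (ℓ : ℕ)
    (hεℓ : 5 / b ^ 2 * η * harm ℓ * ε < ε)
    (rlo rhi : ℝ) (hrlo : 0 < rlo) (hrhi : 0 < rhi)
    (Γx Γy : ℕ → ℝ)
    (hxnn : ∀ i ≤ ℓ, 0 ≤ Γx i) (hynn : ∀ i ≤ ℓ, 0 ≤ Γy i)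
    (hxov : ∀ i : ℕ, 1 ≤ i → i ≤ ℓ →
      Γx i ≤ η / (i : ℝ) * ∑ j ∈ Finset.range (i + 1), Γx j)
    (hyov : ∀ i : ℕ, 1 ≤ i → i ≤ ℓ →
      Γy i ≤ η / (i : ℝ) * ∑ j ∈ Finset.range (i + 1), Γy j)
    (h0l : rlo * Γy 0 ≤ Γx 0) (h0u : Γx 0 ≤ rhi * Γy 0)
    (hil : ∀ i : ℕ, 1 ≤ i → i ≤ ℓ → ((1 + ε) ^ 2)⁻¹ * rlo * Γy i ≤ Γx i)
    (hiu : ∀ i : ℕ, 1 ≤ i → i ≤ ℓ → Γx i ≤ (1 + ε) ^ 2 * rhi * Γy i) :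
    (1 + 5 / b ^ 2 * η * harm ℓ * ε)⁻¹ * rlo * ∑ i ∈ Finset.range (ℓ + 1), Γy i
        ≤ ∑ i ∈ Finset.range (ℓ + 1), Γx i ∧
      ∑ i ∈ Finset.range (ℓ + 1), Γx i
        ≤ (1 + 5 / b ^ 2 * η * harm ℓ * ε) * rhi * ∑ i ∈ Finset.range (ℓ + 1), Γy i := by
  have hE : (0:ℝ) < 1 + 5 / b ^ 2 * η * harm ℓ * ε := by
    have h1 : 0 ≤ 5 / b ^ 2 * η * harm ℓ * ε :=
      mul_nonneg (mul_nonneg (mul_nonneg (by positivity) (le_of_lt hη)) (harm_nonneg ℓ))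
        (le_of_lt hε0)
    linarith
  have hsq : (0:ℝ) < (1 + ε) ^ 2 := by positivity
  constructor
  · -- lower bound: apply aux with roles swapped
    have h0' : Γy 0 ≤ rlo⁻¹ * Γx 0 := by
      rw [le_inv_mul_iff₀ hrlo]; exact h0l
    have hi' : ∀ i : ℕ, 1 ≤ i → i ≤ ℓ → Γy i ≤ (1 + ε) ^ 2 * rlo⁻¹ * Γx i := by
      intro i h1 h2
      have h := hil i h1 h2
      have hc : (0:ℝ) ≤ (1 + ε) ^ 2 * rlo⁻¹ := by positivity
      calc Γy i = (1 + ε) ^ 2 * rlo⁻¹ * (((1 + ε) ^ 2)⁻¹ * rlo * Γy i) := by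
            field_simp
        _ ≤ (1 + ε) ^ 2 * rlo⁻¹ * Γx i := mul_le_mul_of_nonneg_left h hc
    have key := lp_aux b η ε hb0 hb1 hη hε0 hε3 ℓ rlo⁻¹ (inv_pos.mpr hrlo) Γy Γx
      hxnn hxov h0' hi' ℓ le_rfl
    calc (1 + 5 / b ^ 2 * η * harm ℓ * ε)⁻¹ * rlo * ∑ i ∈ Finset.range (ℓ + 1), Γy i
        ≤ (1 + 5 / b ^ 2 * η * harm ℓ * ε)⁻¹ * rlo *
            ((1 + 5 / b ^ 2 * η * harm ℓ * ε) * rlo⁻¹ * ∑ i ∈ Finset.range (ℓ + 1), Γx i) := by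
          apply mul_le_mul_of_nonneg_left key
          positivity
      _ = ∑ i ∈ Finset.range (ℓ + 1), Γx i := by
          have hrw : (1 + 5 / b ^ 2 * η * harm ℓ * ε)⁻¹ * rlo *
              ((1 + 5 / b ^ 2 * η * harm ℓ * ε) * rlo⁻¹ * ∑ i ∈ Finset.range (ℓ + 1), Γx i)
              = ((1 + 5 / b ^ 2 * η * harm ℓ * ε)⁻¹ * (1 + 5 / b ^ 2 * η * harm ℓ * ε)) *
                (rlo * rlo⁻¹) * ∑ i ∈ Finset.range (ℓ + 1), Γx i := by ring
          rw [hrw, inv_mul_cancel₀ hE.ne', mul_inv_cancel₀ hrlo.ne', one_mul, one_mul]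
  · exact lp_aux b η ε hb0 hb1 hη hε0 hε3 ℓ rhi hrhi Γx Γy hynn hyov h0u hiu ℓ le_rfl
end
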